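/- Let W be a symmetric n×n real matrix with nonnegative entries and zero diagonal, let L = D − W be its Laplacian matrix with D = Diag(W·1), let t > 0, and let A = Diag(a) where a ∈ ℝⁿ has all entries positive. Then the matrix tA + L is positive definite, and the absorption kernel K = (tA + L)^{-1} satisfies the triangle inequality for proximities: K_xy + K_xz − K_yz ≤ K_xx for all x, y, z ∈ {1,…,n}. -/

import Mathlib

open Matrix


/-- Let `W` be a symmetric `n × n` real matrix with nonnegative entries
and zero diagonal, `L = D − W` its Laplacian with `D = Diag(W·1)`, `t > 0`, and
`A = Diag(a)` with `a` entrywise positive.  Then `tA + L` is positive definite and the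
absorption kernel `K = (tA + L)⁻¹` satisfies the triangle inequality for proximities. -/
theorem absorption_kernel_proximity {n : ℕ} (W : Matrix (Fin n) (Fin n) ℝ)
    (hW_symm : W.IsSymm) (hW_nonneg : ∀ i j : Fin n, 0 ≤ W i j)
    (hW_diag : ∀ i : Fin n, W i i = 0)
    (L : Matrix (Fin n) (Fin n) ℝ)
    (hL : L = Matrix.diagonal (fun i => ∑ j : Fin n, W i j) - W)
    (t : ℝ) (ht : 0 < t)
    (a : Fin n → ℝ) (ha : ∀ i, 0 < a i)
    (K : Matrix (Fin n) (Fin n) ℝ) (hK : K = (t • Matrix.diagonal a + L)⁻¹) :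
    (t • Matrix.diagonal a + L).PosDef ∧
    (∀ x y z : Fin n, K x y + K x z - K y z ≤ K x x) := by
  set M : Matrix (Fin n) (Fin n) ℝ := t • Matrix.diagonal a + L with hM
  -- symmetry of L and M
  have hLsymm : L.IsSymm := by
    rw [hL]
    exact (Matrix.isSymm_diagonal _).sub hW_symm
  have hMsymm : M.IsSymm := by
    rw [hM]
    exact ((Matrix.isSymm_diagonal a).smul t).add hLsymm
  -- quadratic form of L
  have hWswap : ∀ v : Fin n → ℝ, ∑ i, ∑ j, W i j * v j ^ 2 = ∑ i, ∑ j, W i j * v i ^ 2 := by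
    intro v
    rw [Finset.sum_comm]
    refine Finset.sum_congr rfl fun i _ => Finset.sum_congr rfl fun j _ => ?_
    rw [hW_symm.apply j i]
  have hLquad : ∀ v : Fin n → ℝ,
      2 * (v ⬝ᵥ L *ᵥ v) = ∑ i, ∑ j, W i j * (v i - v j) ^ 2 := by
    intro v
    have t1 : v ⬝ᵥ ((Matrix.diagonal fun i => ∑ j, W i j) *ᵥ v)
        = ∑ i, ∑ j, W i j * v i ^ 2 := by
      simp only [dotProduct, Matrix.mulVec_diagonal, Finset.sum_mul, Finset.mul_sum]
      exact Finset.sum_congr rfl fun i _ => Finset.sum_congr rfl fun j _ => by ring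
    have t2 : v ⬝ᵥ (W *ᵥ v) = ∑ i, ∑ j, W i j * (v i * v j) := by
      simp only [dotProduct, Matrix.mulVec, Finset.mul_sum]
      exact Finset.sum_congr rfl fun i _ => Finset.sum_congr rfl fun j _ => by ring
    have e1 : v ⬝ᵥ L *ᵥ v = ∑ i, ∑ j, (W i j * v i ^ 2 - W i j * (v i * v j)) := by
      rw [hL, Matrix.sub_mulVec, dotProduct_sub, t1, t2]
      simp [Finset.sum_sub_distrib]
    have e2 : ∀ i j : Fin n, W i j * (v i - v j) ^ 2
        = W i j * v i ^ 2 + W i j * v j ^ 2 - 2 * (W i j * (v i * v j)) := by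
      intro i j; ring
    calc 2 * (v ⬝ᵥ L *ᵥ v)
        = 2 * ∑ i, ∑ j, (W i j * v i ^ 2 - W i j * (v i * v j)) := by rw [e1]
      _ = ∑ i, ∑ j, (W i j * v i ^ 2 + W i j * v j ^ 2 - 2 * (W i j * (v i * v j))) := by
          simp only [Finset.sum_sub_distrib, Finset.sum_add_distrib, ← Finset.mul_sum]
          rw [hWswap v]; ring
      _ = ∑ i, ∑ j, W i j * (v i - v j) ^ 2 := by
          refine Finset.sum_congr rfl fun i _ => Finset.sum_congr rfl fun j _ => ?_
          rw [e2]
  have hLnonneg : ∀ v : Fin n → ℝ, 0 ≤ v ⬝ᵥ L *ᵥ v := by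
    intro v
    have h2 : 0 ≤ ∑ i, ∑ j, W i j * (v i - v j) ^ 2 :=
      Finset.sum_nonneg fun i _ => Finset.sum_nonneg fun j _ =>
        mul_nonneg (hW_nonneg i j) (sq_nonneg _)
    nlinarith [hLquad v]
  -- quadratic form of M
  have hMquad : ∀ v : Fin n → ℝ, v ⬝ᵥ M *ᵥ v = t * (∑ i, a i * v i ^ 2) + v ⬝ᵥ L *ᵥ v := by
    intro v
    rw [hM, Matrix.add_mulVec, dotProduct_add, Matrix.smul_mulVec]
    congr 1
    simp only [dotProduct, Pi.smul_apply, Matrix.mulVec_diagonal, smul_eq_mul,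
      Finset.mul_sum]
    exact Finset.sum_congr rfl fun i _ => by ring
  -- positive definiteness
  have hMposdef : M.PosDef := by
    refine Matrix.PosDef.of_dotProduct_mulVec_pos ?_ ?_
    · rw [Matrix.IsHermitian, Matrix.conjTranspose]
      ext i j
      simp [hMsymm.apply j i]
    · intro v hv
      have hstar : star v = v := rfl
      rw [hstar, hMquad v]
      obtain ⟨i, hi⟩ : ∃ i, v i ≠ 0 := Function.ne_iff.mp hv
      have h1 : a i * v i ^ 2 ≤ ∑ j, a j * v j ^ 2 :=
        Finset.single_le_sum (fun j _ => mul_nonneg (ha j).le (sq_nonneg _))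
          (Finset.mem_univ i)
      have h2 : 0 < a i * v i ^ 2 := mul_pos (ha i) (by positivity)
      nlinarith [hLnonneg v]
  refine ⟨hMposdef, ?_⟩
  -- invertibility
  have hdet : IsUnit M.det := hMposdef.det_pos.ne'.isUnit
  have hMK : M * K = 1 := by rw [hK]; exact Matrix.mul_nonsing_inv M hdet
  have hKsymm : ∀ i j, K i j = K j i := by
    intro i j
    have : Kᵀ = K := by
      rw [hK, Matrix.transpose_nonsing_inv, hMsymm]
    exact (congrFun (congrFun this i) j).symm
  -- column sums of M
  have hcolsum : ∀ j, ∑ i, M i j = t * a j := by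
    intro j
    simp only [hM, hL, Matrix.add_apply, Matrix.sub_apply, Matrix.smul_apply,
      Matrix.diagonal_apply, smul_eq_mul]
    rw [Finset.sum_add_distrib, Finset.sum_sub_distrib]
    have e1 : ∑ i, t * (if i = j then a i else 0) = t * a j := by
      simp [Finset.sum_ite_eq']
    have e2 : ∑ i : Fin n, (if i = j then ∑ k, W i k else 0) = ∑ k, W j k := by
      simp [Finset.sum_ite_eq']
    have e3 : ∑ i, W i j = ∑ k, W j k := by
      exact Finset.sum_congr rfl fun i _ => hW_symm.apply j i
    rw [e1, e2, e3]; ring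
  intro x y z
  by_cases hxy : x = y
  · subst hxy
    have : K x z = K x z := rfl
    linarith
  -- the key vector h
  set h : Fin n → ℝ := fun w => K w x - K w y with hh
  have hMh : ∀ w, (M *ᵥ h) w = (if w = x then (1:ℝ) else 0) - (if w = y then 1 else 0) := by
    intro w
    have : h = K *ᵥ (Pi.single x 1 - Pi.single y 1) := by
      funext u
      rw [Matrix.mulVec_sub, Matrix.mulVec_single, Matrix.mulVec_single]
      simp [hh]
    rw [this, Matrix.mulVec_mulVec, hMK, Matrix.one_mulVec]
    simp [Pi.single_apply]
  have hexp : ∀ w, (M *ᵥ h) w = t * (a w * h w) + ∑ j, W w j * (h w - h j) := by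
    intro w
    have e0 : (M *ᵥ h) w = t * (a w * h w) + ((∑ k, W w k) * h w - ∑ j, W w j * h j) := by
      rw [hM, hL, Matrix.add_mulVec, Matrix.sub_mulVec]
      simp only [Pi.add_apply, Pi.sub_apply, Matrix.smul_mulVec, Pi.smul_apply,
        Matrix.mulVec_diagonal, smul_eq_mul]
      rfl
    rw [e0]
    congr 1
    rw [Finset.sum_congr rfl fun j _ => mul_sub (W w j) (h w) (h j),
      Finset.sum_sub_distrib, ← Finset.sum_mul]
  have key : ∀ w, h w ≤ h x := by
    by_contra hc
    push_neg at hc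
    obtain ⟨w₁, hw₁⟩ := hc
    obtain ⟨z₀, _, hz₀⟩ := Finset.exists_max_image Finset.univ h ⟨x, Finset.mem_univ x⟩
    have hmax : ∀ u, h u ≤ h z₀ := fun u => hz₀ u (Finset.mem_univ u)
    have hz₀x : z₀ ≠ x := by
      intro e; rw [e] at hmax; exact absurd (hmax w₁) (not_le.mpr hw₁)
    have h1 : (M *ᵥ h) z₀ ≤ 0 := by
      rw [hMh z₀]
      simp [hz₀x]
      split <;> norm_num
    have h2 : 0 ≤ ∑ j, W z₀ j * (h z₀ - h j) :=
      Finset.sum_nonneg fun j _ => mul_nonneg (hW_nonneg z₀ j) (by linarith [hmax j])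
    have h3 : t * (a z₀ * h z₀) ≤ 0 := by
      have := hexp z₀; linarith
    have h4 : h z₀ ≤ 0 := by
      by_contra h5
      push_neg at h5
      have : 0 < t * (a z₀ * h z₀) := mul_pos ht (mul_pos (ha z₀) h5)
      linarith
    have hall : ∀ u, h u ≤ 0 := fun u => le_trans (hmax u) h4
    -- sum of (M *ᵥ h) equals t * ∑ a u * h u, and also 0
    have hs1 : ∑ w, (M *ᵥ h) w = t * ∑ u, a u * h u := by
      simp only [Matrix.mulVec, dotProduct]
      rw [Finset.sum_comm]
      rw [Finset.mul_sum]
      refine Finset.sum_congr rfl fun j _ => ?_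
      rw [← Finset.sum_mul, hcolsum j]; ring
    have hs2 : ∑ w, (M *ᵥ h) w = 0 := by
      rw [Finset.sum_congr rfl fun w _ => hMh w]
      rw [Finset.sum_sub_distrib]
      simp [Finset.sum_ite_eq']
    have hs3 : ∑ u, a u * h u = 0 := by
      have : t * ∑ u, a u * h u = 0 := by rw [← hs1, hs2]
      exact (mul_eq_zero.mp this).resolve_left ht.ne'
    have hzero : ∀ u, h u = 0 := by
      intro u
      have := (Finset.sum_eq_zero_iff_of_nonpos
        (fun i _ => mul_nonpos_of_nonneg_of_nonpos (ha i).le (hall i))).mp hs3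
        u (Finset.mem_univ u)
      rcases mul_eq_zero.mp this with h' | h'
      · exact absurd h' (ha u).ne'
      · exact h'
    rw [hzero w₁, hzero x] at hw₁
    exact lt_irrefl 0 hw₁
  have hkz := key z
  simp only [hh] at hkz
  have e1 : K z x = K x z := hKsymm z x
  have e2 : K z y = K y z := hKsymm z y
  have e3 : K x y = K y x := hKsymm x y
  linarith [hkz]
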